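/- arXiv:1511.01795 — 7 statements merged into one kernel-verified Lean document; each statement's English description precedes it below -/
import Mathlib

section
/- Fix 0 < p < 1. For each sharing probability q ∈ [0,1], let T_∪(q) be the unique real number T satisfying T = p²·(1+T) + (1−p)²·1 + 2(1−p)p·(q·2 + (1−q)·(1 + 1/(1−p))). Then T_∪ is minimized over q ∈ [0,1] uniquely at q = 1, with minimum value T*_∪ = (−2p² + 2p + 1)/(1−p²). -/
/-- For `0 < p < 1`, if `T q` solves the fixed-point equation
`T = p²(1+T) + (1-p)²·1 + 2(1-p)p·(q·2 + (1-q)(1 + 1/(1-p)))` for each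
sharing probability `q ∈ [0,1]`, then `T` is minimized over `[0,1]` uniquely at
`q = 1`, with minimum value `(-2p² + 2p + 1)/(1-p²)`. -/
theorem optimal_sharing_probability (p : ℝ) (hp0 : 0 < p) (hp1 : p < 1)
    (T : ℝ → ℝ)
    (hT : ∀ q ∈ Set.Icc (0 : ℝ) 1,
      T q = p ^ 2 * (1 + T q) + (1 - p) ^ 2 * 1 +
        2 * (1 - p) * p * (q * 2 + (1 - q) * (1 + 1 / (1 - p)))) :
    T 1 = (-2 * p ^ 2 + 2 * p + 1) / (1 - p ^ 2) ∧
    ∀ q ∈ Set.Icc (0 : ℝ) 1, q ≠ 1 → T 1 < T q := by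
  have hp1' : (1 : ℝ) - p ≠ 0 := by linarith
  have hps : (1 : ℝ) - p ^ 2 > 0 := by nlinarith
  have hps' : (1 : ℝ) - p ^ 2 ≠ 0 := ne_of_gt hps
  have h1 := hT 1 (by constructor <;> norm_num)
  have hT1 : T 1 = (-2 * p ^ 2 + 2 * p + 1) / (1 - p ^ 2) := by
    field_simp at h1 ⊢
    nlinarith [h1]
  refine ⟨hT1, ?_⟩
  intro q hq hq1
  have hq' : q < 1 := lt_of_le_of_ne hq.2 hq1
  have h2 := hT q hq
  have hTq : T q = (-2 * p ^ 2 + 2 * p + 1 + 2 * p ^ 2 * (1 - q)) / (1 - p ^ 2) := by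
    field_simp at h2 ⊢
    nlinarith [h2]
  rw [hT1, hTq]
  apply div_lt_div_of_pos_right _ hps
  nlinarith [mul_pos (mul_pos two_pos (pow_pos hp0 2)) (by linarith : (0:ℝ) < 1 - q)]
end

section
/- Define f(N) = 1 + (1 − (1−p)^N)/(1 − p^N) for integers N ≥ 1 and a real p with 0 < p < 1. If p < 1/2 then f(N) is strictly increasing in N; if p > 1/2 then f(N) is strictly decreasing in N; and if p = 1/2 then f(N) = 2 for all N ≥ 1. -/
/-- For `f(N) = 1 + (1 - (1-p)^N)/(1 - p^N)` with `0 < p < 1`: if `p < 1/2` then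
`f` is strictly increasing in `N ≥ 1`; if `p > 1/2` then `f` is strictly
decreasing in `N ≥ 1`; and if `p = 1/2` then `f(N) = 2` for all `N ≥ 1`. -/
theorem monotonicity_completion_time (p : ℝ) (hp0 : 0 < p) (hp1 : p < 1) :
    (p < 1 / 2 → ∀ N M : ℕ, 1 ≤ N → N < M →
      1 + (1 - (1 - p) ^ N) / (1 - p ^ N) < 1 + (1 - (1 - p) ^ M) / (1 - p ^ M)) ∧
    (p > 1 / 2 → ∀ N M : ℕ, 1 ≤ N → N < M →
      1 + (1 - (1 - p) ^ M) / (1 - p ^ M) < 1 + (1 - (1 - p) ^ N) / (1 - p ^ N)) ∧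
    (p = 1 / 2 → ∀ N : ℕ, 1 ≤ N →
      1 + (1 - (1 - p) ^ N) / (1 - p ^ N) = 2) := by
  have hq0 : 0 < 1 - p := by linarith
  have denom : ∀ N : ℕ, 1 ≤ N → 0 < 1 - p ^ N := by
    intro N hN
    have := pow_lt_one₀ hp0.le hp1 (by omega : N ≠ 0)
    linarith
  refine ⟨?_, ?_, ?_⟩
  · intro h12 N M hN hNM
    have step : ∀ n : ℕ, 1 ≤ n →
        (1 - (1 - p) ^ n) / (1 - p ^ n) < (1 - (1 - p) ^ (n + 1)) / (1 - p ^ (n + 1)) := by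
      intro n hn
      obtain ⟨m, rfl⟩ := Nat.exists_eq_add_of_le hn
      rw [div_lt_div_iff₀ (denom _ (by omega)) (denom _ (by omega))]
      have ha : 0 < p ^ m := pow_pos hp0 m
      have hb : (0:ℝ) < (1 - p) ^ m := pow_pos hq0 m
      have hab : p ^ m ≤ (1 - p) ^ m := pow_le_pow_left₀ hp0.le (by linarith) m
      simp only [pow_add, pow_one, pow_succ]
      nlinarith [mul_pos ha hb, mul_pos hp0 hq0,
        mul_pos (mul_pos hp0 hq0) (mul_pos ha hb),
        mul_nonneg (mul_pos hp0 hq0).le (sub_nonneg.mpr hab)]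
    have main : ∀ M N : ℕ, 1 ≤ N → N < M →
        (1 - (1 - p) ^ N) / (1 - p ^ N) < (1 - (1 - p) ^ M) / (1 - p ^ M) := by
      intro M
      induction M with
      | zero => omega
      | succ M ih =>
        intro N hN hNM
        rcases Nat.lt_succ_iff_lt_or_eq.mp hNM with h | rfl
        · exact lt_trans (ih N hN h) (step M (by omega))
        · exact step N hN
    have := main M N hN hNM
    linarith
  · intro h12 N M hN hNM
    have step : ∀ n : ℕ, 1 ≤ n →
        (1 - (1 - p) ^ (n + 1)) / (1 - p ^ (n + 1)) < (1 - (1 - p) ^ n) / (1 - p ^ n) := by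
      intro n hn
      obtain ⟨m, rfl⟩ := Nat.exists_eq_add_of_le hn
      rw [div_lt_div_iff₀ (denom _ (by omega)) (denom _ (by omega))]
      have ha : 0 < p ^ m := pow_pos hp0 m
      have hb : (0:ℝ) < (1 - p) ^ m := pow_pos hq0 m
      have hab : (1 - p) ^ m ≤ p ^ m := pow_le_pow_left₀ hq0.le (by linarith) m
      simp only [pow_add, pow_one, pow_succ]
      nlinarith [mul_pos ha hb, mul_pos hp0 hq0,
        mul_pos (mul_pos hp0 hq0) (mul_pos ha hb),
        mul_nonneg (mul_pos hp0 hq0).le (sub_nonneg.mpr hab)]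
    have main : ∀ M N : ℕ, 1 ≤ N → N < M →
        (1 - (1 - p) ^ M) / (1 - p ^ M) < (1 - (1 - p) ^ N) / (1 - p ^ N) := by
      intro M
      induction M with
      | zero => omega
      | succ M ih =>
        intro N hN hNM
        rcases Nat.lt_succ_iff_lt_or_eq.mp hNM with h | rfl
        · exact lt_trans (step M (by omega)) (ih N hN h)
        · exact step N hN
    have := main M N hN hNM
    linarith
  · intro hp N hN
    have h : (1 : ℝ) - p = p := by rw [hp]; norm_num
    rw [h, div_self (denom N hN).ne']
    norm_num
end

section
/- Let 0 ≤ p₁ ≤ p₂ < 1. Define T_= = [p₁p₂ + (1−p₁)(1−p₂) + p₁(1−p₂)(1 + 1/(1−p₁)) + p₂(1−p₁)(1 + 1/(1−p₂))]/(1 − p₁p₂) and T*_∪ = {p₁p₂ + (1−p₁)(1−p₂) + 2(1−p₂)p₁ + (1−p₁)p₂·[2(1−p₂)p₁/((1−p₁)p₂) + ((p₂−p₁)/((1−p₁)p₂))·(1 + 1/(1−p₂))]}/(1 − p₁p₂), where for p₂ = 0 (hence p₁ = 0) the bracketed term is interpreted so that T*_∪ = T_= . Then T*_∪ ≤ T_=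 . -/
/-- For `0 ≤ p₁ ≤ p₂ < 1`, the optimal equal-reciprocal completion time `T*_∪`
is at most the no-sharing completion time `T_=`. (Division by zero in Lean makes
the `p₂ = 0` case agree with the intended interpretation `T*_∪ = T_=`.) -/
theorem social_grouping_helps (p₁ p₂ : ℝ) (h0 : 0 ≤ p₁) (h12 : p₁ ≤ p₂) (h2 : p₂ < 1) :
    (p₁ * p₂ + (1 - p₁) * (1 - p₂) + 2 * (1 - p₂) * p₁ +
        (1 - p₁) * p₂ *
          (2 * (1 - p₂) * p₁ / ((1 - p₁) * p₂) +
            ((p₂ - p₁) / ((1 - p₁) * p₂)) * (1 + 1 / (1 - p₂)))) / (1 - p₁ * p₂) ≤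
      (p₁ * p₂ + (1 - p₁) * (1 - p₂) + p₁ * (1 - p₂) * (1 + 1 / (1 - p₁)) +
        p₂ * (1 - p₁) * (1 + 1 / (1 - p₂))) / (1 - p₁ * p₂) := by
  rcases eq_or_lt_of_le (h0.trans h12) with h | hp2
  · have h1 : p₁ = 0 := le_antisymm (h12.trans h.symm.le) h0
    simp [h1, ← h]
  · have h1 : p₁ < 1 := lt_of_le_of_lt h12 h2
    have hd : 0 < 1 - p₁ * p₂ := by nlinarith
    have h1' : 0 < 1 - p₁ := by linarith
    have h2' : 0 < 1 - p₂ := by linarith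
    apply div_le_div_of_nonneg_right ?_ hd.le
    have e1 : (1 - p₁ : ℝ) ≠ 0 := h1'.ne'
    have e2 : (1 - p₂ : ℝ) ≠ 0 := h2'.ne'
    have e3 : p₂ ≠ 0 := hp2.ne'
    field_simp
    have key : 0 ≤ p₁ * p₂ ^ 2 * (1 - p₁) ^ 2 * (1 - p₂) ^ 2 *
        (p₁ * (1 - p₂) + p₂ * (1 - p₁)) := by positivity
    nlinarith [key, mul_nonneg (mul_nonneg h0 (sub_nonneg.2 h12)) h1'.le,
      mul_nonneg (mul_nonneg h0 (sub_nonneg.2 h12)) h2'.le, mul_nonneg (mul_nonneg h0 h1'.le) h2'.le,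
      mul_nonneg (mul_nonneg h0 h2'.le) h2'.le, mul_nonneg (mul_nonneg h0 h1'.le) h1'.le,
      mul_nonneg (mul_nonneg h0 (sub_nonneg.2 h12)) hp2.le, mul_nonneg (mul_nonneg h0 hp2.le) h2'.le]
end

section
/- Let 0 ≤ p₁ ≤ p₂ < 1 and set Δ = p₂ − p₁. Define the full-cooperation completion time T_f = [p₁p₂ + (1−p₁)(1−p₂) + 2p₁(1−p₂) + 2p₂(1−p₁)]/(1 − p₁p₂), and the optimal equal-reciprocal completion time T*_∪ = {p₁p₂ + (1−p₁)(1−p₂) + 2(1−p₂)p₁ + (1−p₁)p₂·[2(1−p₂)p₁/((1−p₁)p₂) + ((p₂−p₁)/((1−p₁)p₂))·(1 + 1/(1−p₂))]}/(1 − p₁p₂) (for p₂ > 0). Then T*_∪ − T_f = [Δ/(1 − (p₂−Δ)p₂)]·(1/(1−p₂) − 1). -/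
/-- For `0 ≤ p₁ ≤ p₂ < 1` with `p₂ > 0` and `Δ = p₂ - p₁`, the performance loss
of the optimal equal-reciprocal scheme relative to full cooperation is
`T*_∪ - T_f = (Δ/(1 - (p₂-Δ)p₂))·(1/(1-p₂) - 1)`. -/
theorem performance_loss_formula (p₁ p₂ : ℝ) (h0 : 0 ≤ p₁) (h12 : p₁ ≤ p₂)
    (h2 : p₂ < 1) (hpos : 0 < p₂) :
    (p₁ * p₂ + (1 - p₁) * (1 - p₂) + 2 * (1 - p₂) * p₁ +
        (1 - p₁) * p₂ *
          (2 * (1 - p₂) * p₁ / ((1 - p₁) * p₂) +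
            ((p₂ - p₁) / ((1 - p₁) * p₂)) * (1 + 1 / (1 - p₂)))) / (1 - p₁ * p₂) -
      (p₁ * p₂ + (1 - p₁) * (1 - p₂) + 2 * p₁ * (1 - p₂) +
        2 * p₂ * (1 - p₁)) / (1 - p₁ * p₂) =
    ((p₂ - p₁) / (1 - (p₂ - (p₂ - p₁)) * p₂)) * (1 / (1 - p₂) - 1) := by
  have h1 : p₁ < 1 := lt_of_le_of_lt h12 h2
  have hne1 : (1 : ℝ) - p₁ ≠ 0 := by linarith
  have hne2 : (1 : ℝ) - p₂ ≠ 0 := by linarith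
  have hp2 : p₂ ≠ 0 := ne_of_gt hpos
  have h12' : p₁ * p₂ < 1 := by nlinarith
  have hne12 : (1 : ℝ) - p₁ * p₂ ≠ 0 := by linarith
  have : p₂ - (p₂ - p₁) = p₁ := by ring
  rw [this]
  field_simp
  ring
end

section
/- Let 0 < p₁ ≤ p₂ < 1. For (a,b) ∈ [0,1]² let T(a,b) be the unique real number T satisfying T·(1 − p₁p₂) = p₁p₂ + (1−p₁)(1−p₂) + (1−p₂)p₁·[2b + (1−b)(1 + 1/(1−p₁))] + (1−p₁)p₂·[2a + (1−a)(1 + 1/(1−p₂))]. Then over all (a,b) ∈ [0,1]² satisfying the equal-reciprocal constraint (1−p₁)p₂·a = (1−p₂)p₁·b, the function T(a,b) is minimized at a* = (1−p₂)p₁/((1−p₁)p₂) and b* = 1. -/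
/-- For `0 < p₁ ≤ p₂ < 1`: if `T a b` solves the stated fixed-point equation for
each pair of sharing probabilities `(a,b) ∈ [0,1]²`, then over all `(a,b)`
satisfying the equal-reciprocal constraint `(1-p₁)p₂·a = (1-p₂)p₁·b`, the
completion time `T` is minimized at `a* = (1-p₂)p₁/((1-p₁)p₂)` and `b* = 1`. -/
theorem optimal_asymmetric_sharing (p₁ p₂ : ℝ) (h1 : 0 < p₁) (h12 : p₁ ≤ p₂)
    (h2 : p₂ < 1) (T : ℝ → ℝ → ℝ)
    (hT : ∀ a ∈ Set.Icc (0 : ℝ) 1, ∀ b ∈ Set.Icc (0 : ℝ) 1,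
      T a b * (1 - p₁ * p₂) =
        p₁ * p₂ + (1 - p₁) * (1 - p₂) +
          (1 - p₂) * p₁ * (2 * b + (1 - b) * (1 + 1 / (1 - p₁))) +
          (1 - p₁) * p₂ * (2 * a + (1 - a) * (1 + 1 / (1 - p₂)))) :
    (1 - p₂) * p₁ / ((1 - p₁) * p₂) ∈ Set.Icc (0 : ℝ) 1 ∧
    (1 - p₁) * p₂ * ((1 - p₂) * p₁ / ((1 - p₁) * p₂)) = (1 - p₂) * p₁ * 1 ∧
    ∀ a ∈ Set.Icc (0 : ℝ) 1, ∀ b ∈ Set.Icc (0 : ℝ) 1,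
      (1 - p₁) * p₂ * a = (1 - p₂) * p₁ * b →
      T ((1 - p₂) * p₁ / ((1 - p₁) * p₂)) 1 ≤ T a b := by
  have hp2 : 0 < p₂ := lt_of_lt_of_le h1 h12
  have hp1 : p₁ < 1 := lt_of_le_of_lt h12 h2
  have hq1 : 0 < 1 - p₁ := by linarith
  have hq2 : 0 < 1 - p₂ := by linarith
  have hden : 0 < (1 - p₁) * p₂ := mul_pos hq1 hp2
  have hAmem : (1 - p₂) * p₁ / ((1 - p₁) * p₂) ∈ Set.Icc (0 : ℝ) 1 := by
    constructor
    · positivity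
    · rw [div_le_one hden]; nlinarith
  have hA : (1 - p₂) * p₁ / ((1 - p₁) * p₂) * ((1 - p₁) * p₂) = (1 - p₂) * p₁ :=
    div_mul_cancel₀ _ (ne_of_gt hden)
  refine ⟨hAmem, by rw [mul_comm, hA, mul_one], ?_⟩
  intro a ha b hb hcon
  have hD : 0 < 1 - p₁ * p₂ := by nlinarith
  have e1 := hT a ha b hb
  have e2 := hT _ hAmem 1 (by norm_num)
  rw [← mul_le_mul_iff_of_pos_right hD, e1, e2]
  set A := (1 - p₂) * p₁ / ((1 - p₁) * p₂) with hAdef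
  have haA : a ≤ A := by
    rw [hAdef, le_div_iff₀ hden]
    nlinarith [hcon, mul_le_mul_of_nonneg_left hb.2 (mul_pos hq2 h1).le]
  have hu : (1 : ℝ) ≤ 1 / (1 - p₁) := by
    rw [le_div_iff₀ hq1]; nlinarith
  have hv : (1 : ℝ) ≤ 1 / (1 - p₂) := by
    rw [le_div_iff₀ hq2]; nlinarith
  nlinarith [mul_nonneg (mul_nonneg (mul_nonneg hq2.le h1.le) (by linarith [hb.2] : (0:ℝ) ≤ 1 - b)) (by linarith : (0:ℝ) ≤ 1 / (1 - p₁) - 1),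
    mul_nonneg (mul_nonneg (mul_nonneg hq1.le hp2.le) (by linarith : (0:ℝ) ≤ A - a)) (by linarith : (0:ℝ) ≤ 1 / (1 - p₂) - 1)]
end

section
/- Fix 0 < p < 1 and 0 ≤ γ < 1. For each sharing probability q ∈ [0,1], let T(q) be the unique real number T satisfying T = p²·(1+T) + (1−p)²·1 + 2(1−p)p·(q·(1 + 1/(1−γ)) + (1−q)·(1 + 1/(1−p))). Then T(q) is an affine function of q; if γ ≤ p then T is minimized over [0,1] at q = 1 with minimum value (1 + 2p(1−p)/(1−γ))/(1 − p²), and if γ ≥ p then T is minimized at q = 0 with minimum value (2p+1)/(1−p²). -/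
/-- Unreliable D2D: for `0 < p < 1`, `0 ≤ γ < 1`, if `T q` solves the stated
fixed-point equation for each `q ∈ [0,1]`, then `T` is an affine function of
`q`; if `γ ≤ p` then `T` is minimized over `[0,1]` at `q = 1` with minimum
value `(1 + 2p(1-p)/(1-γ))/(1-p²)`, and if `γ ≥ p` then `T` is minimized at
`q = 0` with minimum value `(2p+1)/(1-p²)`. -/
theorem unreliable_local_sharing (p γ : ℝ) (hp0 : 0 < p) (hp1 : p < 1)
    (hγ0 : 0 ≤ γ) (hγ1 : γ < 1) (T : ℝ → ℝ)
    (hT : ∀ q ∈ Set.Icc (0 : ℝ) 1,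
      T q = p ^ 2 * (1 + T q) + (1 - p) ^ 2 * 1 +
        2 * (1 - p) * p * (q * (1 + 1 / (1 - γ)) + (1 - q) * (1 + 1 / (1 - p)))) :
    (∃ A B : ℝ, ∀ q ∈ Set.Icc (0 : ℝ) 1, T q = A * q + B) ∧
    (γ ≤ p →
      T 1 = (1 + 2 * p * (1 - p) / (1 - γ)) / (1 - p ^ 2) ∧
      ∀ q ∈ Set.Icc (0 : ℝ) 1, T 1 ≤ T q) ∧
    (γ ≥ p →
      T 0 = (2 * p + 1) / (1 - p ^ 2) ∧
      ∀ q ∈ Set.Icc (0 : ℝ) 1, T 0 ≤ T q) := by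
  have hp2 : (0:ℝ) < 1 - p ^ 2 := by nlinarith
  have hpne : (1:ℝ) - p ≠ 0 := by linarith
  have hγne : (1:ℝ) - γ ≠ 0 := by linarith
  have hp2ne : (1:ℝ) - p ^ 2 ≠ 0 := ne_of_gt hp2
  set A : ℝ := 2 * (1 - p) * p * (1 / (1 - γ) - 1 / (1 - p)) / (1 - p ^ 2) with hA
  set B : ℝ := (p ^ 2 + (1 - p) ^ 2 + 2 * (1 - p) * p * (1 + 1 / (1 - p))) / (1 - p ^ 2) with hB
  have key : ∀ q ∈ Set.Icc (0 : ℝ) 1, T q = A * q + B := by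
    intro q hq
    have h := hT q hq
    have hC : T q * (1 - p ^ 2) = p ^ 2 + (1 - p) ^ 2 +
        2 * (1 - p) * p * (q * (1 + 1 / (1 - γ)) + (1 - q) * (1 + 1 / (1 - p))) := by
      linear_combination h
    have hTq : T q = (p ^ 2 + (1 - p) ^ 2 +
        2 * (1 - p) * p * (q * (1 + 1 / (1 - γ)) + (1 - q) * (1 + 1 / (1 - p)))) / (1 - p ^ 2) := by
      rw [eq_div_iff hp2ne]; exact hC
    rw [hTq, hA, hB]
    field_simp
    ring
  have h1 : (1:ℝ) ∈ Set.Icc (0:ℝ) 1 := by constructor <;> norm_num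
  have h0 : (0:ℝ) ∈ Set.Icc (0:ℝ) 1 := by constructor <;> norm_num
  refine ⟨⟨A, B, key⟩, ?_, ?_⟩
  · intro hγp
    have hAle : A ≤ 0 := by
      rw [hA]
      apply div_nonpos_of_nonpos_of_nonneg _ (le_of_lt hp2)
      have : 1 / (1 - γ) - 1 / (1 - p) ≤ 0 := by
        rw [sub_nonpos, div_le_div_iff₀ (by linarith) (by linarith)]
        linarith
      exact mul_nonpos_of_nonneg_of_nonpos (by nlinarith) this
    constructor
    · rw [key 1 h1, hA, hB]; field_simp; ring
    · intro q hq
      rw [key 1 h1, key q hq]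
      nlinarith [hq.2, hAle]
  · intro hγp
    have hAge : 0 ≤ A := by
      rw [hA]
      apply div_nonneg _ (le_of_lt hp2)
      have : 0 ≤ 1 / (1 - γ) - 1 / (1 - p) := by
        rw [sub_nonneg, div_le_div_iff₀ (by linarith) (by linarith)]
        linarith
      exact mul_nonneg (by nlinarith) this
    constructor
    · rw [key 0 h0, hA, hB]; field_simp; ring
    · intro q hq
      rw [key 0 h0, key q hq]
      nlinarith [hq.1, hAge]
end

section
/- For every real p with 1/2 ≤ p < 1 and every integer N ≥ 1, 1/(1−p) ≥ 1 + (1 − (1−p)^N)/(1 − p^N). -/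
lemma pow_diff_le (p q : ℝ) (hq : 0 ≤ q) (hqp : q ≤ p) (hpq : p + q ≤ 1) :
    ∀ n : ℕ, p ^ (n + 1) - q ^ (n + 1) ≤ p - q := by
  intro n
  induction n with
  | zero => simp
  | succ n ih =>
      have hp0 : 0 ≤ p := le_trans hq hqp
      have hq1 : q ≤ 1 := by linarith
      have hqn : q ^ (n + 1) ≤ q := by
        calc q ^ (n + 1) = q * q ^ n := by ring
        _ ≤ q * 1 := by
            have := pow_le_one₀ hq hq1 (n := n)
            nlinarith
        _ = q := by ring
      have key : p ^ (n + 2) - q ^ (n + 2)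
          = p * (p ^ (n + 1) - q ^ (n + 1)) + q ^ (n + 1) * (p - q) := by ring
      have hqn0 : 0 ≤ q ^ (n + 1) := pow_nonneg hq _
      nlinarith [mul_le_mul_of_nonneg_left ih hp0,
        mul_le_mul_of_nonneg_right hqn (by linarith : (0:ℝ) ≤ p - q)]

/-- For every real `p` with `1/2 ≤ p < 1` and every integer `N ≥ 1`,
`1/(1-p) ≥ 1 + (1 - (1-p)^N)/(1 - p^N)`. -/
theorem single_user_vs_group (p : ℝ) (hp : 1 / 2 ≤ p) (hp1 : p < 1)
    (N : ℕ) (hN : 1 ≤ N) :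
    1 / (1 - p) ≥ 1 + (1 - (1 - p) ^ N) / (1 - p ^ N) := by
  set q : ℝ := 1 - p with hqdef
  have hq0 : 0 < q := by simp [hqdef]; linarith
  have hp0 : 0 < p := by linarith
  have hpN : p ^ N < 1 := pow_lt_one₀ (le_of_lt hp0) hp1 (by omega)
  have hpN0 : 0 < 1 - p ^ N := by linarith
  have hkey : p ^ N * p - q ^ N * q ≤ p - q := by
    obtain ⟨m, rfl⟩ : ∃ m, N = m + 1 := ⟨N - 1, by omega⟩
    have := pow_diff_le p q (le_of_lt hq0) (by simp [hqdef]; linarith)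
      (by simp [hqdef]) (m + 1)
    calc p ^ (m + 1) * p - q ^ (m + 1) * q = p ^ (m + 2) - q ^ (m + 2) := by ring
    _ ≤ p - q := this
  have hdiv : (1 - q ^ N) / (1 - p ^ N) ≤ p / q := by
    rw [div_le_div_iff₀ hpN0 hq0]
    nlinarith
  have h1 : 1 / q = 1 + p / q := by field_simp; ring
  rw [ge_iff_le, h1]
  linarith
end
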